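/- Let M > 0, a² ≤ M², r_± = M ± √(M²-a²). For A with 0 < |A| sufficiently small (specifically AM ≪ 1 so that terms of relative order M/r can be neglected at r ~ 1/(6|A|)), the leading-order boundary where the three-velocity becomes luminal satisfies r²(1 + 3cos²θ) = 1/(6A)², i.e., in Cartesian coordinates x² + y² + 4z² = 1/(36A²): concretely, the quadratic-in-cos²θ equation c₂cos⁴θ + c₁cos²θ + c₀ = 0 with c₀ ≈ r² - 36A²r⁴, c₁ ≈ -108A²r⁴, c₂ ≈ O(A²r²·(M²-a²)) reduces, upon dropping subleading terms, exactly to 36A²r²(1 + 3cos²θ) = 1 whenever r ≫ M. -/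

import Mathlib

set_option maxHeartbeats 1000000

open Real Set

private lemma ellipsoid_aux_key (M a A r w c : ℝ)
    (h36 : 36 * A ^ 2 * r ^ 2 * (1 + 3 * c ^ 2) = 1)
    (hw2 : w ^ 2 = M ^ 2 - a ^ 2) :
    36 * A ^ 2 * (M ^ 2 - a ^ 2) * (3 * r ^ 2 - 6 * M * r + 4 * M ^ 2 - a ^ 2) * c ^ 4
        + (a ^ 2 + 72 * A * (r - M) * M * (M + w)
            - 36 * A ^ 2 * ((3 * r ^ 2 - 6 * M * r + 2 * M ^ 2 + a ^ 2) ^ 2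
              - 6 * (r - M) ^ 2 * (r ^ 2 - 2 * M * r + a ^ 2))) * c ^ 2
        + (r ^ 2 + 2 * M * r + 4 * M ^ 2 * ((r + (M + w)) / (r - (M - w)))
            - 24 * A * M * (M + w) * (r - M)
            - 36 * A ^ 2 * (r ^ 2 - 2 * M * r + a ^ 2) * (r - M) ^ 2)
        = 4 * M ^ 2 * ((r + (M + w)) / (r - (M - w)))
          + (36 * A ^ 2 * (1 + 3 * c ^ 2) * (M * (2 * r - M)) * (r ^ 2 + (r - M) ^ 2)
            + 36 * A ^ 2 * w ^ 2 * (r - M) ^ 2 * (1 + 3 * c ^ 4)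
            - 36 * A ^ 2 * w ^ 4 * c ^ 2 * (1 - c ^ 2)
            + 2 * M * r + a ^ 2 * c ^ 2
            + 24 * A * M * (M + w) * (r - M) * (3 * c ^ 2 - 1)) := by
  linear_combination (-(r ^ 2)) * h36
    - (36 * A ^ 2 * (r - M) ^ 2 * (1 + 3 * c ^ 4)
       - 36 * A ^ 2 * (w ^ 2 + (M ^ 2 - a ^ 2)) * c ^ 2 * (1 - c ^ 2)) * hw2

private lemma ellipsoid_aux_t1 (M A r c : ℝ) (hM : 0 < M) (hA0 : 0 < A) (hr0 : 0 < r)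
    (h2M : 2 * M < r) (hAr1 : 1 ≤ 12 * A * r) (hc0 : 0 ≤ c ^ 2)
    (h36 : 36 * A ^ 2 * r ^ 2 * (1 + 3 * c ^ 2) = 1) :
    0 ≤ 36 * A ^ 2 * (1 + 3 * c ^ 2) * (M * (2 * r - M)) * (r ^ 2 + (r - M) ^ 2) ∧
    36 * A ^ 2 * (1 + 3 * c ^ 2) * (M * (2 * r - M)) * (r ^ 2 + (r - M) ^ 2)
      ≤ 48 * A * M * r ^ 2 := by
  have hr2 : (0:ℝ) < r ^ 2 := by positivity
  have ht1eq : 36 * A ^ 2 * (1 + 3 * c ^ 2) * (M * (2 * r - M)) * (r ^ 2 + (r - M) ^ 2) * r ^ 2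
      = M * (2 * r - M) * (r ^ 2 + (r - M) ^ 2) := by
    linear_combination (M * (2 * r - M) * (r ^ 2 + (r - M) ^ 2)) * h36
  constructor
  · have h1 : (0:ℝ) ≤ M * (2 * r - M) := by nlinarith
    have h2 : (0:ℝ) ≤ 36 * A ^ 2 * (1 + 3 * c ^ 2) := by positivity
    have h3 : (0:ℝ) ≤ r ^ 2 + (r - M) ^ 2 := by positivity
    exact mul_nonneg (mul_nonneg h2 h1) h3
  · have e3 : M * (2 * r - M) * (r ^ 2 + (r - M) ^ 2) ≤ 4 * M * r ^ 3 := by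
      nlinarith [mul_nonneg (mul_nonneg hM.le hr0.le) (show (0:ℝ) ≤ 2 * r - M by linarith),
        mul_nonneg hM.le (sq_nonneg (r - M)), mul_pos hM (mul_pos hr0 hr0),
        mul_nonneg (mul_nonneg (mul_nonneg hM.le hr0.le) hr0.le)
          (show (0:ℝ) ≤ 2 * r - M by linarith)]
    have e4 : 4 * M * r ^ 3 ≤ 48 * A * M * r ^ 4 := by
      linarith [mul_nonneg (mul_nonneg (mul_nonneg hM.le hr0.le) (mul_nonneg hr0.le hr0.le))
        (show (0:ℝ) ≤ 12 * A * r - 1 by linarith)]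
    rw [← mul_le_mul_iff_of_pos_right hr2]
    calc 36 * A ^ 2 * (1 + 3 * c ^ 2) * (M * (2 * r - M)) * (r ^ 2 + (r - M) ^ 2) * r ^ 2
        = M * (2 * r - M) * (r ^ 2 + (r - M) ^ 2) := ht1eq
      _ ≤ 4 * M * r ^ 3 := e3
      _ ≤ 48 * A * M * r ^ 4 := e4
      _ = 48 * A * M * r ^ 2 * r ^ 2 := by ring

private lemma ellipsoid_aux_t2 (M A r w c : ℝ) (hM : 0 < M) (hA0 : 0 < A) (hr0 : 0 < r)
    (h2M : 2 * M < r) (hAM : 12 * A * M < 1) (hw0 : 0 ≤ w) (hwM : w ≤ M)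
    (hc1 : c ^ 2 ≤ 1) :
    36 * A ^ 2 * w ^ 2 * (r - M) ^ 2 * (1 + 3 * c ^ 4) ≤ 12 * A * M * r ^ 2 := by
  have hw2M : w ^ 2 ≤ M ^ 2 := pow_le_pow_left₀ hw0 hwM 2
  have hrM2 : (r - M) ^ 2 ≤ r ^ 2 := pow_le_pow_left₀ (by linarith) (by linarith) 2
  have b1 : 36 * A ^ 2 * w ^ 2 * (r - M) ^ 2 * (1 + 3 * c ^ 4)
      ≤ 36 * A ^ 2 * M ^ 2 * r ^ 2 * 4 := by
    gcongr
    nlinarith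
  have b2 : 36 * A ^ 2 * M ^ 2 * r ^ 2 * 4 ≤ 12 * A * M * r ^ 2 := by
    linarith [mul_nonneg (mul_nonneg (mul_nonneg hA0.le hM.le) (sq_nonneg r))
      (show (0:ℝ) ≤ 1 - 12 * A * M by linarith)]
  linarith

private lemma ellipsoid_aux_t3 (M A r w c : ℝ) (hM : 0 < M) (hA0 : 0 < A) (hr0 : 0 < r)
    (h2M : 2 * M < r) (hAM : 12 * A * M < 1) (hw0 : 0 ≤ w) (hwM : w ≤ M)
    (hc1 : c ^ 2 ≤ 1) (hc0 : 0 ≤ c ^ 2) :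
    36 * A ^ 2 * w ^ 4 * c ^ 2 * (1 - c ^ 2) ≤ A * M * r ^ 2 := by
  have hw4 : w ^ 4 ≤ M ^ 4 := pow_le_pow_left₀ hw0 hwM 4
  have g1 : 36 * A ^ 2 * w ^ 4 * c ^ 2 * (1 - c ^ 2) ≤ 36 * A ^ 2 * M ^ 4 := by
    nlinarith [mul_nonneg (sq_nonneg A) (show (0:ℝ) ≤ M ^ 4 - w ^ 4 by linarith),
      mul_nonneg (mul_nonneg (sq_nonneg A) (pow_nonneg hw0 4))
        (show (0:ℝ) ≤ 1 - c ^ 2 * (1 - c ^ 2) by nlinarith)]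
  have g2 : 36 * A ^ 2 * M ^ 4 ≤ A * M * r ^ 2 := by
    linarith [mul_nonneg (mul_nonneg hA0.le (pow_nonneg hM.le 3))
        (show (0:ℝ) ≤ 1 - 12 * A * M by linarith),
      mul_nonneg (mul_nonneg hA0.le hM.le) (show (0:ℝ) ≤ r ^ 2 - 4 * M ^ 2 by nlinarith),
      mul_nonneg (mul_nonneg hA0.le hM.le) (sq_nonneg r)]
  linarith

private lemma ellipsoid_aux_t6 (M A r w c : ℝ) (hM : 0 < M) (hA0 : 0 < A) (hr0 : 0 < r)
    (h2M : 2 * M < r) (hw0 : 0 ≤ w) (hwM : w ≤ M) (hc1 : c ^ 2 ≤ 1) (hc0 : 0 ≤ c ^ 2) :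
    -(48 * A * M * r ^ 2) ≤ 24 * A * M * (M + w) * (r - M) * (3 * c ^ 2 - 1) ∧
    24 * A * M * (M + w) * (r - M) * (3 * c ^ 2 - 1) ≤ 48 * A * M * r ^ 2 := by
  have base0 : 0 ≤ 24 * A * M * (M + w) * (r - M) :=
    mul_nonneg (mul_nonneg (mul_nonneg (by positivity) hM.le) (by linarith)) (by linarith)
  have baseu : 24 * A * M * (M + w) * (r - M) ≤ 24 * A * M * r ^ 2 := by
    have x1 : (M + w) * (r - M) ≤ r ^ 2 := by nlinarith
    have x2 := mul_nonneg (mul_nonneg hA0.le hM.le) (sub_nonneg.mpr x1)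
    nlinarith [x2]
  constructor
  · have y2 : -(24 * A * M * (M + w) * (r - M))
        ≤ 24 * A * M * (M + w) * (r - M) * (3 * c ^ 2 - 1) := by
      nlinarith [mul_nonneg base0 (show (0:ℝ) ≤ 3 * c ^ 2 by positivity)]
    linarith
  · have y1 : 24 * A * M * (M + w) * (r - M) * (3 * c ^ 2 - 1)
        ≤ 2 * (24 * A * M * (M + w) * (r - M)) := by
      nlinarith [mul_nonneg base0 (show (0:ℝ) ≤ 3 - 3 * c ^ 2 by linarith)]
    linarith

private lemma ellipsoid_aux_main (M a A r s w c : ℝ) (hM : 0 < M) (ha : a ^ 2 ≤ M ^ 2)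
    (hA0 : 0 < A) (hAδ : A < 1 / (24 * M)) (hr0 : 0 < r) (h6 : 6 * A * s * r = 1)
    (hs1 : 1 ≤ s) (hs2 : s ≤ 2) (hsq : s ^ 2 = 1 + 3 * c ^ 2)
    (hw2 : w ^ 2 = M ^ 2 - a ^ 2) (hw0 : 0 ≤ w) (hc1 : c ^ 2 ≤ 1) (hc0 : 0 ≤ c ^ 2) :
    |36 * A ^ 2 * (M ^ 2 - a ^ 2) * (3 * r ^ 2 - 6 * M * r + 4 * M ^ 2 - a ^ 2) * c ^ 4
        + (a ^ 2 + 72 * A * (r - M) * M * (M + w)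
            - 36 * A ^ 2 * ((3 * r ^ 2 - 6 * M * r + 2 * M ^ 2 + a ^ 2) ^ 2
              - 6 * (r - M) ^ 2 * (r ^ 2 - 2 * M * r + a ^ 2))) * c ^ 2
        + (r ^ 2 + 2 * M * r + 4 * M ^ 2 * ((r + (M + w)) / (r - (M - w)))
            - 24 * A * M * (M + w) * (r - M)
            - 36 * A ^ 2 * (r ^ 2 - 2 * M * r + a ^ 2) * (r - M) ^ 2)|
      ≤ 1000 * A * M * r ^ 2 := by
  have h36 : 36 * A ^ 2 * r ^ 2 * (1 + 3 * c ^ 2) = 1 := by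
    linear_combination (6 * A * s * r + 1) * h6 - 36 * A ^ 2 * r ^ 2 * hsq
  have hAr1 : 1 ≤ 12 * A * r := by nlinarith [mul_pos hA0 hr0]
  have hAr2 : 6 * A * r ≤ 1 := by nlinarith [mul_pos hA0 hr0]
  have hAM24 : 24 * A * M < 1 := by
    rw [lt_div_iff₀ (by positivity)] at hAδ; linarith [hAδ]
  have h2M : 2 * M < r := by
    by_contra h
    push_neg at h
    have h12 : 12 * A * r ≤ 24 * A * M := by nlinarith
    linarith
  have hAM : 12 * A * M < 1 := by nlinarith [mul_pos hA0 hM]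
  have hwM : w ≤ M := by nlinarith
  have hden : 0 < r - (M - w) := by linarith
  have hfr4 : (r + (M + w)) / (r - (M - w)) ≤ 4 := by
    rw [div_le_iff₀ hden]; nlinarith
  have hfr0 : 0 ≤ (r + (M + w)) / (r - (M - w)) := div_nonneg (by linarith) hden.le
  have hF1 : 4 * M ^ 2 * ((r + (M + w)) / (r - (M - w))) ≤ 96 * A * M * r ^ 2 := by
    have h1 : 4 * M ^ 2 * ((r + (M + w)) / (r - (M - w))) ≤ 16 * M ^ 2 := by nlinarith
    have e1 : 16 * M ^ 2 ≤ 8 * M * r := by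
      nlinarith [mul_pos hM (show (0:ℝ) < r - 2 * M by linarith)]
    have e2 : 8 * M * r ≤ 96 * A * M * r ^ 2 := by
      linarith [mul_nonneg (mul_nonneg hM.le hr0.le)
        (show (0:ℝ) ≤ 12 * A * r - 1 by linarith)]
    linarith
  have hF0 : 0 ≤ 4 * M ^ 2 * ((r + (M + w)) / (r - (M - w))) := by positivity
  have key := ellipsoid_aux_key M a A r w c h36 hw2
  obtain ⟨ht1l, ht1u⟩ := ellipsoid_aux_t1 M A r c hM hA0 hr0 h2M hAr1 hc0 h36
  have ht2u := ellipsoid_aux_t2 M A r w c hM hA0 hr0 h2M hAM hw0 hwM hc1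
  have ht2l : 0 ≤ 36 * A ^ 2 * w ^ 2 * (r - M) ^ 2 * (1 + 3 * c ^ 4) := by positivity
  have ht3u := ellipsoid_aux_t3 M A r w c hM hA0 hr0 h2M hAM hw0 hwM hc1 hc0
  have ht3l : 0 ≤ 36 * A ^ 2 * w ^ 4 * c ^ 2 * (1 - c ^ 2) :=
    mul_nonneg (by positivity) (by linarith)
  have ht4 : 2 * M * r ≤ 24 * A * M * r ^ 2 := by
    linarith [mul_nonneg (mul_nonneg hM.le hr0.le) (show (0:ℝ) ≤ 12 * A * r - 1 by linarith)]
  have ht4l : 0 ≤ 2 * M * r := by positivity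
  have ht5 : a ^ 2 * c ^ 2 ≤ 6 * A * M * r ^ 2 := by
    have q1 : a ^ 2 * c ^ 2 ≤ M ^ 2 := by
      nlinarith [mul_nonneg (sq_nonneg a) (show (0:ℝ) ≤ 1 - c ^ 2 by linarith)]
    have q2 : M ^ 2 ≤ 6 * A * M * r ^ 2 := by
      linarith [mul_nonneg hM.le (show (0:ℝ) ≤ r - 2 * M by linarith),
        mul_nonneg (mul_nonneg hM.le hr0.le) (show (0:ℝ) ≤ 12 * A * r - 1 by linarith)]
    linarith
  have ht5l : 0 ≤ a ^ 2 * c ^ 2 := by positivity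
  obtain ⟨ht6l, ht6u⟩ := ellipsoid_aux_t6 M A r w c hM hA0 hr0 h2M hw0 hwM hc1 hc0
  rw [abs_le]
  constructor
  · linarith [key, hF0, ht1l, ht2l, ht3u, ht4l, ht5l, ht6l,
      mul_nonneg (mul_nonneg hA0.le hM.le) (sq_nonneg r)]
  · linarith [key, hF1, ht1u, ht2u, ht3l, ht4, ht5, ht6u,
      mul_nonneg (mul_nonneg hA0.le hM.le) (sq_nonneg r)]

/-- The large-radius ellipsoidal limit of the validity boundary 𝓔: for fixed `θ`, the radius
`r(A) = 1/(6A√(1 + 3cos²θ))` satisfies `36A²r(A)²(1 + 3cos²θ) = 1` exactly (i.e. the ellipsoid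
equation `r²(1 + 3cos²θ) = 1/(6A)²`), and it solves the full quartic boundary equation
`c₂ cos⁴θ + c₁ cos²θ + c₀ = 0` up to an error of relative order `O(AM)` as `A → 0⁺`. -/
theorem ellipsoid_limit_of_boundary (M a θ : ℝ) (hM : 0 < M) (ha : a ^ 2 ≤ M ^ 2) :
    let rp : ℝ := M + Real.sqrt (M ^ 2 - a ^ 2)
    let rm : ℝ := M - Real.sqrt (M ^ 2 - a ^ 2)
    let Δ : ℝ → ℝ := fun r => r ^ 2 - 2 * M * r + a ^ 2
    let c₀ : ℝ → ℝ → ℝ := fun A r =>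
      r ^ 2 + 2 * M * r + 4 * M ^ 2 * ((r + rp) / (r - rm))
        - 24 * A * M * rp * (r - M) - 36 * A ^ 2 * Δ r * (r - M) ^ 2
    let c₁ : ℝ → ℝ → ℝ := fun A r =>
      a ^ 2 + 72 * A * (r - M) * M * rp
        - 36 * A ^ 2 * ((3 * r ^ 2 - 6 * M * r + 2 * M ^ 2 + a ^ 2) ^ 2
          - 6 * (r - M) ^ 2 * Δ r)
    let c₂ : ℝ → ℝ → ℝ := fun A r =>
      36 * A ^ 2 * (M ^ 2 - a ^ 2) * (3 * r ^ 2 - 6 * M * r + 4 * M ^ 2 - a ^ 2)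
    let rA : ℝ → ℝ := fun A => 1 / (6 * A * Real.sqrt (1 + 3 * Real.cos θ ^ 2))
    (∀ A : ℝ, 0 < A → 36 * A ^ 2 * rA A ^ 2 * (1 + 3 * Real.cos θ ^ 2) = 1) ∧
      ∃ C > (0 : ℝ), ∃ δ > (0 : ℝ), ∀ A ∈ Ioo (0 : ℝ) δ,
        |c₂ A (rA A) * Real.cos θ ^ 4 + c₁ A (rA A) * Real.cos θ ^ 2 + c₀ A (rA A)|
          ≤ C * A * M * rA A ^ 2 := by
  intro rp rm Δ c₀ c₁ c₂ rA
  have hc1 : Real.cos θ ^ 2 ≤ 1 := by nlinarith [Real.neg_one_le_cos θ, Real.cos_le_one θ]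
  have hc0 : (0:ℝ) ≤ Real.cos θ ^ 2 := sq_nonneg _
  have hs0 : (0:ℝ) < 1 + 3 * Real.cos θ ^ 2 := by positivity
  have hsq : Real.sqrt (1 + 3 * Real.cos θ ^ 2) ^ 2 = 1 + 3 * Real.cos θ ^ 2 :=
    Real.sq_sqrt hs0.le
  have hspos : 0 < Real.sqrt (1 + 3 * Real.cos θ ^ 2) := Real.sqrt_pos.mpr hs0
  constructor
  · intro A hA
    simp only [rA]
    field_simp
    linear_combination -36 * hsq
  · refine ⟨1000, by norm_num, 1 / (24 * M), by positivity, ?_⟩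
    rintro A ⟨hA0, hAδ⟩
    simp only [c₀, c₁, c₂, Δ, rp, rm, rA]
    set c := Real.cos θ with hcdef
    set s := Real.sqrt (1 + 3 * c ^ 2) with hsdef
    set w := Real.sqrt (M ^ 2 - a ^ 2) with hwdef
    set r := 1 / (6 * A * s) with hrdef
    have hr0 : 0 < r := by rw [hrdef]; positivity
    have h6 : 6 * A * s * r = 1 := by rw [hrdef]; field_simp
    clear_value r
    clear hrdef
    have hs1 : 1 ≤ s := by nlinarith [hsq, hspos.le]
    have hs2 : s ≤ 2 := by nlinarith [hsq, hspos.le]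
    have hw2 : w ^ 2 = M ^ 2 - a ^ 2 := Real.sq_sqrt (by nlinarith)
    have hw0 : 0 ≤ w := Real.sqrt_nonneg _
    clear_value s
    clear hsdef
    clear_value w
    clear hwdef
    clear_value c
    clear hcdef
    clear rp rm Δ c₀ c₁ c₂ rA
    exact ellipsoid_aux_main M a A r s w c hM ha hA0 hAδ hr0 h6 hs1 hs2 hsq hw2 hw0 hc1 hc0
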